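/- Lindström–Gessel–Viennot identity (general form): for a finite directed acyclic graph G with edge weights in a commutative ring, and vertex sequences u₁,…,uₙ and v₁,…,vₙ, one has Σ_{π ∈ Sₙ} sgn(π) · (total weight of n-tuples of pairwise vertex-disjoint paths (p₁,…,pₙ) with pᵢ from uᵢ to v_{π(i)}) = det(h(uᵢ,vⱼ))_{i,j=1}^{n}, where h(u,v) is the total weight of all paths from u to v. -/

import Mathlib

open Finset

/-- `l` is (the list of vertices of) a directed path from `u` to `v` in the
directed graph with adjacency relation `Adj`. -/
def IsDirPath {V : Type*} (Adj : V → V → Prop) (u v : V) (l : List V) : Prop :=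
  l.Chain' Adj ∧ l.head? = some u ∧ l.getLast? = some v

/-- The weight of a path, given as a list of vertices: the product of the
weights of its edges. -/
def listWt {V R : Type*} [CommRing R] (w : V → V → R) (l : List V) : R :=
  ((l.zip l.tail).map fun ab => w ab.1 ab.2).prod

namespace LGVAux

variable {V : Type*} {R : Type*}

theorem chain_transGen {Adj : V → V → Prop} {x y : V} {t : List V}
    (h : List.Chain Adj x t) (hy : y ∈ t) : Relation.TransGen Adj x y := by
  induction t generalizing x with
  | nil => simp at hy
  | cons z t ih =>
    rw [show List.Chain Adj x (z :: t) ↔ Adj x z ∧ List.Chain Adj z t from List.isChain_cons_cons] at h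
    rcases List.mem_cons.1 hy with rfl | hy
    · exact Relation.TransGen.single h.1
    · exact Relation.TransGen.head h.1 (ih h.2 hy)

theorem chain'_nodup {Adj : V → V → Prop} (hacyc : ∀ a, ¬ Relation.TransGen Adj a a) :
    ∀ {l : List V}, l.Chain' Adj → l.Nodup := by
  intro l
  induction l with
  | nil => simp
  | cons x t ih =>
    intro h
    have hch : List.Chain Adj x t := h
    exact List.nodup_cons.2 ⟨fun hx => hacyc x (chain_transGen hch hx), ih h.tail⟩

theorem nodup_finite [Fintype V] : {l : List V | l.Nodup}.Finite :=
  (List.finite_length_le V (Fintype.card V)).subset fun l hl => hl.length_le_card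

variable [CommRing R] (w : V → V → R)

theorem listWt_single (x : V) : listWt w [x] = 1 := rfl

theorem listWt_cons_cons (x y : V) (l : List V) :
    listWt w (x :: y :: l) = w x y * listWt w (y :: l) := by
  simp [listWt]

theorem listWt_append (s : List V) (x : V) (t : List V) :
    listWt w (s ++ x :: t) = listWt w (s ++ [x]) * listWt w (x :: t) := by
  induction s with
  | nil => simp [listWt_single]
  | cons y s ih =>
    cases s with
    | nil => simp [listWt_cons_cons, listWt_single, mul_assoc]
    | cons z s' =>
      simp only [List.cons_append, listWt_cons_cons] at *
      rw [ih]; ring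

theorem head?_append_cons (s : List V) (x : V) (t t' : List V) :
    (s ++ x :: t).head? = (s ++ x :: t').head? := by cases s <;> simp

theorem getLast?_append_cons (s : List V) (x : V) (t : List V) :
    (s ++ x :: t).getLast? = (x :: t).getLast? := by
  rw [List.getLast?_append]
  cases h : (x :: t).getLast? with
  | none => simp [List.getLast?_eq_none_iff] at h
  | some a => rfl

theorem chain'_glue {Adj : V → V → Prop} {s t s' t' : List V} {x : V}
    (h1 : (s ++ x :: t).Chain' Adj) (h2 : (s' ++ x :: t').Chain' Adj) :
    (s ++ x :: t').Chain' Adj := by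
  rw [List.append_cons] at h1 h2 ⊢
  change List.IsChain Adj (s ++ [x] ++ t) at h1
  change List.IsChain Adj (s' ++ [x] ++ t') at h2
  change List.IsChain Adj (s ++ [x] ++ t')
  rw [List.isChain_append] at h1 h2 ⊢
  refine ⟨h1.1, h2.2.1, ?_⟩
  intro a ha y hy
  have hax : x = a := by simpa [List.getLast?_concat] using ha
  subst hax
  exact h2.2.2 x (by simp [List.getLast?_concat]) y hy

theorem firstFail_exists (p : V → Prop) : ∀ {l : List V}, (∃ y ∈ l, ¬ p y) →
    ∃ z : List V × V × List V, l = z.1 ++ z.2.1 :: z.2.2 ∧ (∀ y ∈ z.1, p y) ∧ ¬ p z.2.1 := by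
  intro l
  induction l with
  | nil => rintro ⟨y, hy, -⟩; simp at hy
  | cons a l ih =>
    intro h
    by_cases hp : p a
    · have h' : ∃ y ∈ l, ¬ p y := by
        obtain ⟨y, hy, hyp⟩ := h
        rcases List.mem_cons.1 hy with rfl | hy
        · exact absurd hp hyp
        · exact ⟨y, hy, hyp⟩
      obtain ⟨⟨s, x, t⟩, h1, h2, h3⟩ := ih h'
      refine ⟨⟨a :: s, x, t⟩, by simp [h1], ?_, h3⟩
      rintro y hy
      rcases List.mem_cons.1 hy with rfl | hy
      · exact hp
      · exact h2 y hy
    · exact ⟨⟨[], a, l⟩, rfl, by simp, hp⟩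

theorem firstFail_unique (p : V → Prop) :
    ∀ {s : List V} {x : V} {t s' : List V} {x' : V} {t' : List V},
    s ++ x :: t = s' ++ x' :: t' → (∀ y ∈ s, p y) → ¬ p x → (∀ y ∈ s', p y) → ¬ p x' →
    s = s' ∧ x = x' ∧ t = t' := by
  intro s
  induction s with
  | nil =>
    intro x t s' x' t' h hs hx hs' hx'
    cases s' with
    | nil => simp_all
    | cons z s'' =>
      simp only [List.nil_append, List.cons_append, List.cons.injEq] at h
      exact absurd (h.1 ▸ hs' z (by simp)) hx
  | cons y s ih =>
    intro x t s' x' t' h hs hx hs' hx'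
    cases s' with
    | nil =>
      simp only [List.nil_append, List.cons_append, List.cons.injEq] at h
      exact absurd (h.1 ▸ hs y (by simp)) hx'
    | cons z s'' =>
      simp only [List.cons_append, List.cons.injEq] at h
      obtain ⟨rfl, h2⟩ := h
      obtain ⟨h3, h4, h5⟩ := ih h2 (fun a ha => hs _ (by simp [ha])) hx
        (fun a ha => hs' _ (by simp [ha])) hx'
      exact ⟨by rw [h3], h4, h5⟩

theorem min'_congr {α : Type*} [LinearOrder α] {s t : Finset α} (hst : s = t) (hs : s.Nonempty) :
    s.min' hs = t.min' (hst ▸ hs) := by subst hst; rfl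


section Invol
open scoped Classical

variable {n : ℕ}

/-- `P` is a non-vertex-disjoint system of paths. -/
def Bad (P : Fin n → List V) : Prop := ∃ i, ∃ j, j ≠ i ∧ ∃ x, x ∈ P i ∧ x ∈ P j

noncomputable def i0 (P : Fin n → List V) (h : Bad P) : Fin n :=
  (univ.filter fun i => ∃ j, j ≠ i ∧ ∃ x, x ∈ P i ∧ x ∈ P j).min'
    (by obtain ⟨i, hi⟩ := h; exact ⟨i, mem_filter.2 ⟨mem_univ _, hi⟩⟩)

theorem i0_bad (P : Fin n → List V) (h : Bad P) :
    ∃ j, j ≠ i0 P h ∧ ∃ x, x ∈ P (i0 P h) ∧ x ∈ P j := by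
  have h1 : i0 P h ∈ (univ.filter fun i => ∃ j, j ≠ i ∧ ∃ x, x ∈ P i ∧ x ∈ P j) :=
    min'_mem _ _
  exact (mem_filter.1 h1).2

theorem spl_ex (P : Fin n → List V) (h : Bad P) :
    ∃ z : List V × V × List V, P (i0 P h) = z.1 ++ z.2.1 :: z.2.2 ∧
      (∀ y ∈ z.1, ∀ j, j ≠ i0 P h → y ∉ P j) ∧ ∃ j, j ≠ i0 P h ∧ z.2.1 ∈ P j := by
  obtain ⟨j, hj, x, hx1, hx2⟩ := i0_bad P h
  obtain ⟨z, h1, h2, h3⟩ := firstFail_exists (fun y => ∀ j, j ≠ i0 P h → y ∉ P j)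
    ⟨x, hx1, fun hc => hc j hj hx2⟩
  have h3' : ¬ ∀ j, j ≠ i0 P h → z.2.1 ∉ P j := h3
  push_neg at h3'
  exact ⟨z, h1, h2, h3'⟩

noncomputable def pA (P : Fin n → List V) (h : Bad P) : List V := (Classical.choose (spl_ex P h)).1
noncomputable def x0 (P : Fin n → List V) (h : Bad P) : V := (Classical.choose (spl_ex P h)).2.1
noncomputable def pB (P : Fin n → List V) (h : Bad P) : List V := (Classical.choose (spl_ex P h)).2.2

theorem spl_spec (P : Fin n → List V) (h : Bad P) :
    P (i0 P h) = pA P h ++ x0 P h :: pB P h ∧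
      (∀ y ∈ pA P h, ∀ j, j ≠ i0 P h → y ∉ P j) ∧
      ∃ j, j ≠ i0 P h ∧ x0 P h ∈ P j :=
  Classical.choose_spec (spl_ex P h)

noncomputable def j0 (P : Fin n → List V) (h : Bad P) : Fin n :=
  (univ.filter fun j => j ≠ i0 P h ∧ x0 P h ∈ P j).min'
    (by obtain ⟨j, hj1, hj2⟩ := (spl_spec P h).2.2
        exact ⟨j, mem_filter.2 ⟨mem_univ _, hj1, hj2⟩⟩)

theorem j0_spec (P : Fin n → List V) (h : Bad P) :
    j0 P h ≠ i0 P h ∧ x0 P h ∈ P (j0 P h) := by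
  have h1 : j0 P h ∈ (univ.filter fun j => j ≠ i0 P h ∧ x0 P h ∈ P j) := min'_mem _ _
  exact (mem_filter.1 h1).2

theorem splJ_ex (P : Fin n → List V) (h : Bad P) :
    ∃ z : List V × V × List V, P (j0 P h) = z.1 ++ z.2.1 :: z.2.2 ∧
      (x0 P h ∉ z.1) ∧ z.2.1 = x0 P h := by
  obtain ⟨z, h1, h2, h3⟩ := firstFail_exists (fun y => y ≠ x0 P h)
    ⟨x0 P h, (j0_spec P h).2, fun hc => hc rfl⟩
  exact ⟨z, h1, fun hc => h2 _ hc rfl, not_not.1 h3⟩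

noncomputable def pC (P : Fin n → List V) (h : Bad P) : List V := (Classical.choose (splJ_ex P h)).1
noncomputable def pD (P : Fin n → List V) (h : Bad P) : List V := (Classical.choose (splJ_ex P h)).2.2

theorem splJ_spec (P : Fin n → List V) (h : Bad P) :
    P (j0 P h) = pC P h ++ x0 P h :: pD P h ∧ x0 P h ∉ pC P h := by
  obtain ⟨h1, h2, h3⟩ := Classical.choose_spec (splJ_ex P h)
  rw [h3] at h1
  exact ⟨h1, h2⟩

noncomputable def newP (P : Fin n → List V) (h : Bad P) : Fin n → List V :=
  Function.update (Function.update P (i0 P h) (pA P h ++ x0 P h :: pD P h)) (j0 P h)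
    (pC P h ++ x0 P h :: pB P h)

theorem newP_apply_i0 (P : Fin n → List V) (h : Bad P) :
    newP P h (i0 P h) = pA P h ++ x0 P h :: pD P h := by
  rw [newP, Function.update_of_ne (j0_spec P h).1.symm, Function.update_self]

theorem newP_apply_j0 (P : Fin n → List V) (h : Bad P) :
    newP P h (j0 P h) = pC P h ++ x0 P h :: pB P h := by
  rw [newP, Function.update_self]

theorem newP_apply_other (P : Fin n → List V) (h : Bad P) {k : Fin n}
    (h1 : k ≠ i0 P h) (h2 : k ≠ j0 P h) : newP P h k = P k := by
  rw [newP, Function.update_of_ne h2, Function.update_of_ne h1]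

theorem bad_newP (P : Fin n → List V) (h : Bad P) : Bad (newP P h) :=
  ⟨i0 P h, j0 P h, (j0_spec P h).1, x0 P h,
    by rw [newP_apply_i0]; simp, by rw [newP_apply_j0]; simp⟩


section Props

variable {Adj : V → V → Prop} {P : Fin n → List V} (h : Bad P)

theorem x0_not_mem_pA : x0 P h ∉ pA P h := fun hc =>
  (spl_spec P h).2.1 _ hc (j0 P h) (j0_spec P h).1 (j0_spec P h).2

theorem pA_disj_pB (hacyc : ∀ a, ¬ Relation.TransGen Adj a a)
    (hch : ∀ i, (P i).Chain' Adj) : ∀ y ∈ pA P h, y ∉ pB P h := by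
  have hnd : (P (i0 P h)).Nodup := chain'_nodup hacyc (hch (i0 P h))
  rw [(spl_spec P h).1, List.append_cons, List.nodup_append] at hnd
  intro y hy hy'
  exact hnd.2.2 y (by simp [hy]) y hy' rfl

theorem newP_chain' (hch : ∀ i, (P i).Chain' Adj) : ∀ i, (newP P h i).Chain' Adj := by
  intro i
  by_cases hi : i = j0 P h
  · subst hi
    rw [newP_apply_j0]
    have h1 := hch (j0 P h); rw [(splJ_spec P h).1] at h1
    have h2 := hch (i0 P h); rw [(spl_spec P h).1] at h2
    exact chain'_glue h1 h2
  · by_cases hi' : i = i0 P h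
    · subst hi'
      rw [newP_apply_i0]
      have h1 := hch (i0 P h); rw [(spl_spec P h).1] at h1
      have h2 := hch (j0 P h); rw [(splJ_spec P h).1] at h2
      exact chain'_glue h1 h2
    · rw [newP_apply_other P h hi' hi]; exact hch i

theorem isDirPath_newP {u v : Fin n → V} {π : Equiv.Perm (Fin n)}
    (hP : ∀ i, IsDirPath Adj (u i) (v (π i)) (P i)) :
    ∀ i, IsDirPath Adj (u i) (v ((π * Equiv.swap (i0 P h) (j0 P h)) i)) (newP P h i) := by
  have hchain := newP_chain' h (fun i => (hP i).1)
  intro i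
  by_cases hi : i = j0 P h
  · subst hi
    refine ⟨hchain _, ?_, ?_⟩
    · rw [newP_apply_j0, head?_append_cons _ _ _ (pD P h), ← (splJ_spec P h).1]
      exact (hP (j0 P h)).2.1
    · rw [newP_apply_j0, getLast?_append_cons, ← getLast?_append_cons (pA P h),
        ← (spl_spec P h).1, Equiv.Perm.mul_apply, Equiv.swap_apply_right]
      exact (hP (i0 P h)).2.2
  · by_cases hi' : i = i0 P h
    · subst hi'
      refine ⟨hchain _, ?_, ?_⟩
      · rw [newP_apply_i0, head?_append_cons _ _ _ (pB P h), ← (spl_spec P h).1]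
        exact (hP (i0 P h)).2.1
      · rw [newP_apply_i0, getLast?_append_cons, ← getLast?_append_cons (pC P h),
          ← (splJ_spec P h).1, Equiv.Perm.mul_apply, Equiv.swap_apply_left]
        exact (hP (j0 P h)).2.2
    · rw [newP_apply_other P h hi' hi, Equiv.Perm.mul_apply,
        Equiv.swap_apply_of_ne_of_ne hi' hi]
      exact hP i

theorem weight_newP [CommRing R] (w : V → V → R) :
    ∏ i, listWt w (newP P h i) = ∏ i, listWt w (P i) := by
  have hne : i0 P h ≠ j0 P h := (j0_spec P h).1.symm
  have e1 : (fun k => listWt w (newP P h k)) =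
      Function.update (Function.update (fun k => listWt w (P k)) (i0 P h)
        (listWt w (pA P h ++ x0 P h :: pD P h))) (j0 P h)
        (listWt w (pC P h ++ x0 P h :: pB P h)) := by
    funext k
    by_cases hk : k = j0 P h
    · subst hk; rw [newP_apply_j0, Function.update_self]
    · rw [Function.update_of_ne hk]
      by_cases hk' : k = i0 P h
      · subst hk'; rw [newP_apply_i0, Function.update_self]
      · rw [Function.update_of_ne hk', newP_apply_other P h hk' hk]
  have e2 : ∀ (f : Fin n → R), (∏ i, f i) =
      f (j0 P h) * (f (i0 P h) * ∏ i ∈ (univ.erase (j0 P h)).erase (i0 P h), f i) := by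
    intro f
    rw [← Finset.mul_prod_erase univ f (mem_univ (j0 P h)),
      ← Finset.mul_prod_erase (univ.erase (j0 P h)) f
        (by simp [hne] : i0 P h ∈ univ.erase (j0 P h))]
  calc ∏ i, listWt w (newP P h i)
      = ∏ i, Function.update (Function.update (fun k => listWt w (P k)) (i0 P h)
        (listWt w (pA P h ++ x0 P h :: pD P h))) (j0 P h)
        (listWt w (pC P h ++ x0 P h :: pB P h)) i := by rw [← e1]
    _ = listWt w (pC P h ++ x0 P h :: pB P h) *
        (listWt w (pA P h ++ x0 P h :: pD P h) *
          ∏ i ∈ (univ \ {j0 P h}) \ {i0 P h}, listWt w (P i)) := by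
        rw [Finset.prod_update_of_mem (mem_univ _),
          Finset.prod_update_of_mem (by simp [hne] : i0 P h ∈ univ \ {j0 P h})]
    _ = listWt w (P (j0 P h)) *
        (listWt w (P (i0 P h)) * ∏ i ∈ (univ \ {j0 P h}) \ {i0 P h}, listWt w (P i)) := by
        rw [(spl_spec P h).1, (splJ_spec P h).1,
          listWt_append w (pA P h) (x0 P h) (pD P h),
          listWt_append w (pC P h) (x0 P h) (pB P h),
          listWt_append w (pA P h) (x0 P h) (pB P h),
          listWt_append w (pC P h) (x0 P h) (pD P h)]
        ring
    _ = ∏ i, listWt w (P i) := by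
        rw [Finset.sdiff_singleton_eq_erase, Finset.sdiff_singleton_eq_erase]
        exact (e2 (fun i => listWt w (P i))).symm


theorem mem_union_iff (y : V) :
    (y ∈ newP P h (i0 P h) ∨ y ∈ newP P h (j0 P h)) ↔
      (y ∈ P (i0 P h) ∨ y ∈ P (j0 P h)) := by
  rw [newP_apply_i0, newP_apply_j0, (spl_spec P h).1, (splJ_spec P h).1]
  simp only [List.mem_append, List.mem_cons]
  tauto

theorem mem_other_iff {i : Fin n} (hi0 : i ≠ i0 P h) (hj0 : i ≠ j0 P h) (x : V) :
    (∃ j, j ≠ i ∧ x ∈ newP P h j) ↔ (∃ j, j ≠ i ∧ x ∈ P j) := by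
  constructor
  · rintro ⟨j, hj, hx⟩
    by_cases hji : j = i0 P h
    · subst hji
      rcases (mem_union_iff h x).1 (Or.inl hx) with hc | hc
      · exact ⟨i0 P h, Ne.symm hi0, hc⟩
      · exact ⟨j0 P h, Ne.symm hj0, hc⟩
    · by_cases hjj : j = j0 P h
      · subst hjj
        rcases (mem_union_iff h x).1 (Or.inr hx) with hc | hc
        · exact ⟨i0 P h, Ne.symm hi0, hc⟩
        · exact ⟨j0 P h, Ne.symm hj0, hc⟩
      · exact ⟨j, hj, by rwa [newP_apply_other P h hji hjj] at hx⟩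
  · rintro ⟨j, hj, hx⟩
    by_cases hji : j = i0 P h
    · subst hji
      rcases (mem_union_iff h x).2 (Or.inl hx) with hc | hc
      · exact ⟨i0 P h, Ne.symm hi0, hc⟩
      · exact ⟨j0 P h, Ne.symm hj0, hc⟩
    · by_cases hjj : j = j0 P h
      · subst hjj
        rcases (mem_union_iff h x).2 (Or.inr hx) with hc | hc
        · exact ⟨i0 P h, Ne.symm hi0, hc⟩
        · exact ⟨j0 P h, Ne.symm hj0, hc⟩
      · exact ⟨j, hj, by rwa [newP_apply_other P h hji hjj]⟩

theorem i0_newP (h' : Bad (newP P h)) : i0 (newP P h) h' = i0 P h := by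
  have key : ∀ i, (∃ j, j ≠ i ∧ ∃ x, x ∈ newP P h i ∧ x ∈ newP P h j) ↔
      (∃ j, j ≠ i ∧ ∃ x, x ∈ P i ∧ x ∈ P j) := by
    intro i
    by_cases hi0 : i = i0 P h
    · subst hi0
      refine iff_of_true ⟨j0 P h, (j0_spec P h).1, x0 P h, ?_, ?_⟩ (i0_bad P h)
      · rw [newP_apply_i0]; simp
      · rw [newP_apply_j0]; simp
    · by_cases hj0 : i = j0 P h
      · subst hj0
        refine iff_of_true ⟨i0 P h, Ne.symm (j0_spec P h).1, x0 P h, ?_, ?_⟩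
          ⟨i0 P h, Ne.symm (j0_spec P h).1, x0 P h, (j0_spec P h).2,
            by rw [(spl_spec P h).1]; simp⟩
        · rw [newP_apply_j0]; simp
        · rw [newP_apply_i0]; simp
      · rw [newP_apply_other P h hi0 hj0]
        constructor
        · rintro ⟨j, hj, x, hx1, hx2⟩
          obtain ⟨j', hj', hx'⟩ := (mem_other_iff h hi0 hj0 x).1 ⟨j, hj, hx2⟩
          exact ⟨j', hj', x, hx1, hx'⟩
        · rintro ⟨j, hj, x, hx1, hx2⟩
          obtain ⟨j', hj', hx'⟩ := (mem_other_iff h hi0 hj0 x).2 ⟨j, hj, hx2⟩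
          exact ⟨j', hj', x, hx1, hx'⟩
  unfold i0
  exact min'_congr (by ext i; simp only [mem_filter, mem_univ, true_and]; exact key i) _

theorem spl_newP (hacyc : ∀ a, ¬ Relation.TransGen Adj a a)
    (hch : ∀ i, (P i).Chain' Adj) (h' : Bad (newP P h)) :
    pA (newP P h) h' = pA P h ∧ x0 (newP P h) h' = x0 P h ∧ pB (newP P h) h' = pD P h := by
  obtain ⟨e1, e2, e3⟩ := spl_spec (newP P h) h'
  rw [i0_newP h h'] at e1 e2 e3
  rw [newP_apply_i0] at e1
  have hA : ∀ y ∈ pA P h, ∀ j, j ≠ i0 P h → y ∉ newP P h j := by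
    intro y hy j hj hyQ
    by_cases hji : j = j0 P h
    · subst hji
      rw [newP_apply_j0] at hyQ
      rcases List.mem_append.1 hyQ with hc | hc
      · exact (spl_spec P h).2.1 y hy (j0 P h) (j0_spec P h).1
          (by rw [(splJ_spec P h).1]; exact List.mem_append_left _ hc)
      · rcases List.mem_cons.1 hc with rfl | hc
        · exact x0_not_mem_pA h hy
        · exact pA_disj_pB h hacyc hch y hy hc
    · rw [newP_apply_other P h hj hji] at hyQ
      exact (spl_spec P h).2.1 y hy j hj hyQ
  have hx : ¬ (∀ j, j ≠ i0 P h → x0 P h ∉ newP P h j) := fun hc =>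
    hc (j0 P h) (j0_spec P h).1 (by rw [newP_apply_j0]; simp)
  have e3' : ¬ (∀ j, j ≠ i0 P h → x0 (newP P h) h' ∉ newP P h j) := by
    rintro hc; obtain ⟨j, hj1, hj2⟩ := e3; exact hc j hj1 hj2
  obtain ⟨g1, g2, g3⟩ := firstFail_unique (fun y => ∀ j, j ≠ i0 P h → y ∉ newP P h j)
    e1 hA hx e2 e3'
  exact ⟨g1.symm, g2.symm, g3.symm⟩

theorem j0_newP (hacyc : ∀ a, ¬ Relation.TransGen Adj a a)
    (hch : ∀ i, (P i).Chain' Adj) (h' : Bad (newP P h)) :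
    j0 (newP P h) h' = j0 P h := by
  unfold j0
  refine min'_congr ?_ _
  ext j
  simp only [mem_filter, mem_univ, true_and]
  rw [i0_newP h h', (spl_newP h hacyc hch h').2.1]
  constructor
  · rintro ⟨hj1, hj2⟩
    refine ⟨hj1, ?_⟩
    by_cases hjj : j = j0 P h
    · subst hjj; exact (j0_spec P h).2
    · rwa [newP_apply_other P h hj1 hjj] at hj2
  · rintro ⟨hj1, hj2⟩
    refine ⟨hj1, ?_⟩
    by_cases hjj : j = j0 P h
    · subst hjj; rw [newP_apply_j0]; simp
    · rwa [newP_apply_other P h hj1 hjj]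

theorem splJ_newP (hacyc : ∀ a, ¬ Relation.TransGen Adj a a)
    (hch : ∀ i, (P i).Chain' Adj) (h' : Bad (newP P h)) :
    pC (newP P h) h' = pC P h ∧ pD (newP P h) h' = pB P h := by
  obtain ⟨e1, e2⟩ := splJ_spec (newP P h) h'
  rw [j0_newP h hacyc hch h'] at e1
  rw [newP_apply_j0] at e1
  rw [(spl_newP h hacyc hch h').2.1] at e1 e2
  obtain ⟨g1, g2, g3⟩ := firstFail_unique (fun y => y ≠ x0 P h) e1
    (fun y hy hc => (splJ_spec P h).2 (hc ▸ hy)) (fun hc => hc rfl)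
    (fun y hy hc => e2 (hc ▸ hy)) (fun hc => hc rfl)
  exact ⟨g1.symm, g3.symm⟩

theorem newP_newP (hacyc : ∀ a, ¬ Relation.TransGen Adj a a)
    (hch : ∀ i, (P i).Chain' Adj) (h' : Bad (newP P h)) :
    newP (newP P h) h' = P := by
  funext k
  obtain ⟨sA, sx, sB⟩ := spl_newP h hacyc hch h'
  obtain ⟨sC, sD⟩ := splJ_newP h hacyc hch h'
  have hi := i0_newP h h'
  have hj := j0_newP h hacyc hch h'
  by_cases hk : k = j0 P h
  · subst hk
    have e := newP_apply_j0 (newP P h) h'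
    rw [hj, sx, sC, sB] at e
    rw [e, ← (splJ_spec P h).1]
  · by_cases hk' : k = i0 P h
    · subst hk'
      have e := newP_apply_i0 (newP P h) h'
      rw [hi, sA, sx, sD] at e
      rw [e, ← (spl_spec P h).1]
    · rw [newP_apply_other (newP P h) h' (by rw [hi]; exact hk') (by rw [hj]; exact hk),
        newP_apply_other P h hk' hk]

end Props
end Invol

section PathFinset
variable [Fintype V]

noncomputable def pathFinset (Adj : V → V → Prop) (hacyc : ∀ a, ¬ Relation.TransGen Adj a a)
    (a b : V) : Finset (List V) :=
  Set.Finite.toFinset (s := {l : List V | IsDirPath Adj a b l})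
    (nodup_finite.subset fun l hl => chain'_nodup hacyc hl.1)

theorem coe_pathFinset (Adj : V → V → Prop) (hacyc : ∀ a, ¬ Relation.TransGen Adj a a)
    (a b : V) : ↑(pathFinset Adj hacyc a b) = {l : List V | IsDirPath Adj a b l} :=
  Set.Finite.coe_toFinset _

theorem mem_pathFinset {Adj : V → V → Prop} {hacyc : ∀ a, ¬ Relation.TransGen Adj a a}
    {a b : V} {l : List V} : l ∈ pathFinset Adj hacyc a b ↔ IsDirPath Adj a b l :=
  Set.Finite.mem_toFinset _

end PathFinset
end LGVAux

theorem sum_invol_zero {V R : Type*} [Fintype V] [CommRing R]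
    (Adj : V → V → Prop) (hacyc : ∀ a, ¬ Relation.TransGen Adj a a)
    (w : V → V → R) (n : ℕ) (u v : Fin n → V)
    (S : Finset (Σ _ : Equiv.Perm (Fin n), (Fin n → List V)))
    (hS : ∀ x : Σ _ : Equiv.Perm (Fin n), (Fin n → List V),
      x ∈ S ↔ ((∀ i, IsDirPath Adj (u i) (v (x.1 i)) (x.2 i)) ∧
        ¬ ∀ i j, i ≠ j → ∀ y : V, ¬(y ∈ x.2 i ∧ y ∈ x.2 j))) :
    ∑ x ∈ S, ((Equiv.Perm.sign x.1 : ℤ) : R) * ∏ i, listWt w (x.2 i) = 0 := by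
  classical
  have badof : ∀ x : Σ _ : Equiv.Perm (Fin n), (Fin n → List V),
      x ∈ S → LGVAux.Bad x.2 := by
    intro x hx
    have h2 := ((hS x).1 hx).2
    push_neg at h2
    obtain ⟨i, j, hij, y, hy1, hy2⟩ := h2
    exact ⟨i, j, Ne.symm hij, y, hy1, hy2⟩
  refine Finset.sum_involution
    (fun x hx => ⟨x.1 * Equiv.swap (LGVAux.i0 x.2 (badof x hx)) (LGVAux.j0 x.2 (badof x hx)),
      LGVAux.newP x.2 (badof x hx)⟩) ?_ ?_ ?_ ?_
  · -- sums to zero in pairs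
    rintro ⟨π, P⟩ ha
    have hb := badof ⟨π, P⟩ ha
    have hne : LGVAux.i0 P hb ≠ LGVAux.j0 P hb := (LGVAux.j0_spec P hb).1.symm
    have hw := LGVAux.weight_newP hb w
    have hs : ((Equiv.Perm.sign (π * Equiv.swap (LGVAux.i0 P hb) (LGVAux.j0 P hb)) : ℤ) : R)
        = -((Equiv.Perm.sign π : ℤ) : R) := by
      rw [Equiv.Perm.sign_mul, Equiv.Perm.sign_swap hne]
      push_cast
      ring
    show ((Equiv.Perm.sign π : ℤ) : R) * ∏ i, listWt w (P i)
      + ((Equiv.Perm.sign (π * Equiv.swap (LGVAux.i0 P hb) (LGVAux.j0 P hb)) : ℤ) : R)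
        * ∏ i, listWt w (LGVAux.newP P hb i) = 0
    rw [hs, hw]
    ring
  · -- no fixed points
    rintro ⟨π, P⟩ ha - heq
    have hb := badof ⟨π, P⟩ ha
    have hne : LGVAux.i0 P hb ≠ LGVAux.j0 P hb := (LGVAux.j0_spec P hb).1.symm
    have h1 : π * Equiv.swap (LGVAux.i0 P hb) (LGVAux.j0 P hb) = π := congrArg Sigma.fst heq
    have h2 := congrArg (fun σ : Equiv.Perm (Fin n) => σ (LGVAux.i0 P hb)) h1
    simp only [Equiv.Perm.mul_apply, Equiv.swap_apply_left] at h2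
    exact hne.symm (π.injective h2)
  · -- maps into the set
    rintro ⟨π, P⟩ ha
    have hb := badof ⟨π, P⟩ ha
    have hP : ∀ i, IsDirPath Adj (u i) (v (π i)) (P i) := ((hS _).1 ha).1
    have hne : LGVAux.i0 P hb ≠ LGVAux.j0 P hb := (LGVAux.j0_spec P hb).1.symm
    refine (hS _).2 ⟨?_, ?_⟩
    · exact LGVAux.isDirPath_newP hb hP
    · intro hdisj
      refine hdisj (LGVAux.i0 P hb) (LGVAux.j0 P hb) hne (LGVAux.x0 P hb) ⟨?_, ?_⟩
      · show LGVAux.x0 P hb ∈ LGVAux.newP P hb (LGVAux.i0 P hb)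
        rw [LGVAux.newP_apply_i0]; simp
      · show LGVAux.x0 P hb ∈ LGVAux.newP P hb (LGVAux.j0 P hb)
        rw [LGVAux.newP_apply_j0]; simp
  · -- involution
    rintro ⟨π, P⟩ ha
    have hb := badof ⟨π, P⟩ ha
    have hch : ∀ i, (P i).Chain' Adj := fun i => (((hS _).1 ha).1 i).1
    have hb' : LGVAux.Bad (LGVAux.newP P hb) := LGVAux.bad_newP P hb
    have e1 : LGVAux.i0 (LGVAux.newP P hb) hb' = LGVAux.i0 P hb := LGVAux.i0_newP hb hb'
    have e2 : LGVAux.j0 (LGVAux.newP P hb) hb' = LGVAux.j0 P hb :=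
      LGVAux.j0_newP hb hacyc hch hb'
    have e3 : LGVAux.newP (LGVAux.newP P hb) hb' = P := LGVAux.newP_newP hb hacyc hch hb'
    show (⟨π * Equiv.swap (LGVAux.i0 P hb) (LGVAux.j0 P hb)
        * Equiv.swap (LGVAux.i0 (LGVAux.newP P hb) hb') (LGVAux.j0 (LGVAux.newP P hb) hb'),
      LGVAux.newP (LGVAux.newP P hb) hb'⟩ :
        Σ _ : Equiv.Perm (Fin n), (Fin n → List V)) = ⟨π, P⟩
    rw [e1, e2, e3, mul_assoc, Equiv.swap_mul_self, mul_one]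

/-- The Lindström–Gessel–Viennot identity, general form. -/
theorem lgv_general {V R : Type*} [Fintype V] [CommRing R]
    (Adj : V → V → Prop) (hacyc : ∀ a, ¬ Relation.TransGen Adj a a)
    (w : V → V → R) (n : ℕ) (u v : Fin n → V) :
    (∑ π : Equiv.Perm (Fin n), ((Equiv.Perm.sign π : ℤ) : R) *
        ∑ᶠ P ∈ {P : Fin n → List V |
            (∀ i, IsDirPath Adj (u i) (v (π i)) (P i)) ∧
            ∀ i j, i ≠ j → ∀ x : V, ¬(x ∈ P i ∧ x ∈ P j)},
          ∏ i, listWt w (P i)) =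
      Matrix.det (Matrix.of fun i j : Fin n =>
        ∑ᶠ p ∈ {p : List V | IsDirPath Adj (u i) (v j) p}, listWt w p) := by
  classical
  have hent : ∀ i j : Fin n,
      (∑ᶠ p ∈ {p : List V | IsDirPath Adj (u i) (v j) p}, listWt w p)
      = ∑ p ∈ LGVAux.pathFinset Adj hacyc (u i) (v j), listWt w p := by
    intro i j
    rw [← LGVAux.coe_pathFinset Adj hacyc (u i) (v j), finsum_mem_coe_finset]
  have hset2 : ∀ π : Equiv.Perm (Fin n),
      (∑ᶠ P ∈ {P : Fin n → List V |
            (∀ i, IsDirPath Adj (u i) (v (π i)) (P i)) ∧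
            ∀ i j, i ≠ j → ∀ x : V, ¬(x ∈ P i ∧ x ∈ P j)},
          ∏ i, listWt w (P i))
      = ∑ P ∈ (Fintype.piFinset fun i => LGVAux.pathFinset Adj hacyc (u i) (v (π i))).filter
          (fun P => ∀ i j, i ≠ j → ∀ x : V, ¬(x ∈ P i ∧ x ∈ P j)),
          ∏ i, listWt w (P i) := by
    intro π
    have hcoe : {P : Fin n → List V |
            (∀ i, IsDirPath Adj (u i) (v (π i)) (P i)) ∧
            ∀ i j, i ≠ j → ∀ x : V, ¬(x ∈ P i ∧ x ∈ P j)}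
        = ↑((Fintype.piFinset fun i => LGVAux.pathFinset Adj hacyc (u i) (v (π i))).filter
          (fun P => ∀ i j, i ≠ j → ∀ x : V, ¬(x ∈ P i ∧ x ∈ P j))) := by
      ext P
      simp only [Set.mem_setOf_eq, Finset.coe_filter, Fintype.mem_piFinset,
        LGVAux.mem_pathFinset]
    rw [hcoe, finsum_mem_coe_finset]
  simp only [hset2, hent]
  rw [← Matrix.det_transpose, Matrix.det_apply']
  simp only [Matrix.transpose_apply, Matrix.of_apply, Finset.prod_univ_sum]
  have hsplit : ∀ σ : Equiv.Perm (Fin n),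
      (∑ P ∈ Fintype.piFinset fun i => LGVAux.pathFinset Adj hacyc (u i) (v (σ i)),
        ∏ i, listWt w (P i))
      = (∑ P ∈ (Fintype.piFinset fun i => LGVAux.pathFinset Adj hacyc (u i) (v (σ i))).filter
          (fun P => ∀ i j, i ≠ j → ∀ x : V, ¬(x ∈ P i ∧ x ∈ P j)), ∏ i, listWt w (P i))
        + ∑ P ∈ (Fintype.piFinset fun i => LGVAux.pathFinset Adj hacyc (u i) (v (σ i))).filter
          (fun P => ¬ ∀ i j, i ≠ j → ∀ x : V, ¬(x ∈ P i ∧ x ∈ P j)), ∏ i, listWt w (P i) :=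
    fun σ => (Finset.sum_filter_add_sum_filter_not _ _ _).symm
  simp only [hsplit, mul_add, Finset.sum_add_distrib]
  suffices hz : (∑ σ : Equiv.Perm (Fin n), ((Equiv.Perm.sign σ : ℤ) : R) *
      ∑ P ∈ (Fintype.piFinset fun i => LGVAux.pathFinset Adj hacyc (u i) (v (σ i))).filter
        (fun P => ¬ ∀ i j, i ≠ j → ∀ x : V, ¬(x ∈ P i ∧ x ∈ P j)),
        ∏ i, listWt w (P i)) = 0 by
    rw [hz, add_zero]
  have hkey := sum_invol_zero Adj hacyc w n u v
    (Finset.univ.sigma fun π : Equiv.Perm (Fin n) =>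
      (Fintype.piFinset fun i => LGVAux.pathFinset Adj hacyc (u i) (v (π i))).filter
        (fun P => ¬ ∀ i j, i ≠ j → ∀ x : V, ¬(x ∈ P i ∧ x ∈ P j)))
    (by
      intro x
      simp only [Finset.mem_sigma, Finset.mem_univ, true_and, Finset.mem_filter,
        Fintype.mem_piFinset, LGVAux.mem_pathFinset])
  rw [Finset.sum_sigma] at hkey
  simp only [Finset.mul_sum]
  exact hkey
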